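/- Let x = (x_n) and y = (y_n) be sequences of real numbers such that the series ∑_n x_n and ∑_n y_n are absolutely convergent. If every point of E(x) has a unique representation, or every point of E(y) has a unique representation, then E(x,y) is a Cantor set, i.e. it is nonempty, compact, perfect and totally disconnected. -/

import Mathlib

/-- The achievement set of a sequence: the set of all subsums. -/
def achievementSet {E : Type*} [AddCommMonoid E] [TopologicalSpace E] (f : ℕ → E) : Set E :=
  {s | ∃ A : Set ℕ, s = ∑' n : A, f n}

open Topology Set

/-- Subtype sums equal sums of "if" indicators. -/
lemma ind_tsum {E : Type*} [AddCommMonoid E] [TopologicalSpace E] (g : ℕ → E) (b : ℕ → Bool) :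
    (∑' n : {n | b n = true}, g n) = ∑' n, if b n then g n else 0 := by
  rw [tsum_subtype]
  refine tsum_congr fun n => ?_
  by_cases h : b n = true <;> simp [Set.indicator_apply, h]

lemma inj_of_uniq (g : ℕ → ℝ)
    (hu : ∀ s ∈ achievementSet g, ∃! A : Set ℕ, s = ∑' n : A, g n)
    {b b' : ℕ → Bool}
    (h : (∑' n, if b n then g n else 0) = ∑' n, if b' n then g n else 0) :
    b = b' := by
  rw [← ind_tsum, ← ind_tsum] at h
  have hmem : (∑' n : ({n | b n = true} : Set ℕ), g n) ∈ achievementSet g := ⟨_, rfl⟩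
  obtain ⟨A, -, hAu⟩ := hu _ hmem
  have e1 : ({n | b n = true} : Set ℕ) = A := hAu _ rfl
  have e2 : ({n | b' n = true} : Set ℕ) = A := hAu _ h
  have e : ({n | b n = true} : Set ℕ) = {n | b' n = true} := e1.trans e2.symm
  funext n
  have := Set.ext_iff.mp e n
  simp only [Set.mem_setOf_eq] at this
  cases hb : b n <;> cases hb' : b' n <;> simp_all

theorem stmt_5 (x y : ℕ → ℝ)
    (hx : Summable fun n => |x n|) (hy : Summable fun n => |y n|)
    (huniq : (∀ s ∈ achievementSet x, ∃! A : Set ℕ, s = ∑' n : A, x n) ∨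
             (∀ t ∈ achievementSet y, ∃! A : Set ℕ, t = ∑' n : A, y n)) :
    (achievementSet (fun n => (x n, y n))).Nonempty ∧
    IsCompact (achievementSet (fun n => (x n, y n))) ∧
    Perfect (achievementSet (fun n => (x n, y n))) ∧
    IsTotallyDisconnected (achievementSet (fun n => (x n, y n))) := by
  classical
  set v : ℕ → ℝ × ℝ := fun n => (x n, y n) with hvdef
  have hv : Summable fun n => ‖v n‖ := by
    refine Summable.of_nonneg_of_le (fun n => norm_nonneg _) (fun n => ?_) (hx.add hy)
    have : ‖v n‖ = max |x n| |y n| := by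
      simp [hvdef, Prod.norm_def, Real.norm_eq_abs]
    rw [this]
    exact max_le (le_add_of_nonneg_right (abs_nonneg _)) (le_add_of_nonneg_left (abs_nonneg _))
  have hvsum : ∀ b : ℕ → Bool, Summable fun n => if b n then v n else 0 := by
    intro b
    refine Summable.of_norm_bounded hv fun n => ?_
    cases h : b n <;> simp
  set Φ : (ℕ → Bool) → ℝ × ℝ := fun b => ∑' n, if b n then v n else 0 with hΦdef
  -- the achievement set is the range of Φ
  have hrange : achievementSet v = Set.range Φ := by
    ext s
    constructor
    · rintro ⟨A, rfl⟩
      refine ⟨fun n => decide (n ∈ A), ?_⟩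
      have hA : {n | (fun n => decide (n ∈ A)) n = true} = A := by ext n; simp
      show (∑' n : ℕ, if decide (n ∈ A) then v n else 0) = ∑' n : A, v n
      rw [← ind_tsum, hA]
    · rintro ⟨b, rfl⟩
      exact ⟨{n | b n = true}, (ind_tsum v b).symm⟩
  -- continuity of Φ
  have hcont : Continuous Φ := by
    refine continuous_tsum (fun n => ?_) hv (fun n b => ?_)
    · exact (continuous_of_discreteTopology
        (f := fun c : Bool => if c then v n else 0)).comp (continuous_apply n)
    · cases h : b n <;> simp
  -- components of Φ
  have hfst : ∀ b : ℕ → Bool, (Φ b).1 = ∑' n, if b n then x n else 0 := by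
    intro b
    have := (ContinuousLinearMap.fst ℝ ℝ ℝ).map_tsum (hvsum b)
    rw [hΦdef]
    refine this.trans (tsum_congr fun n => ?_)
    cases h : b n <;> simp [hvdef]
  have hsnd : ∀ b : ℕ → Bool, (Φ b).2 = ∑' n, if b n then y n else 0 := by
    intro b
    have := (ContinuousLinearMap.snd ℝ ℝ ℝ).map_tsum (hvsum b)
    rw [hΦdef]
    refine this.trans (tsum_congr fun n => ?_)
    cases h : b n <;> simp [hvdef]
  -- injectivity
  have hinj : Function.Injective Φ := by
    intro b b' h
    rcases huniq with hu | hu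
    · refine inj_of_uniq x hu ?_
      rw [← hfst b, ← hfst b', h]
    · refine inj_of_uniq y hu ?_
      rw [← hsnd b, ← hsnd b', h]
  have hemb : Topology.IsEmbedding Φ := (hcont.isClosedEmbedding hinj).toIsEmbedding
  have hcomp : IsCompact (Set.range Φ) := isCompact_range hcont
  refine ⟨?_, ?_, ?_, ?_⟩
  · exact ⟨Φ (fun _ => false), hrange ▸ Set.mem_range_self _⟩
  · rw [show achievementSet (fun n => (x n, y n)) = Set.range Φ from hrange]
    exact hcomp
  · rw [show achievementSet (fun n => (x n, y n)) = Set.range Φ from hrange]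
    refine ⟨hcomp.isClosed, ?_⟩
    rintro z ⟨b, rfl⟩
    rw [accPt_iff_nhds]
    intro U hU
    obtain ⟨ε, hε, hball⟩ := Metric.mem_nhds_iff.mp hU
    -- choose n with ‖v n‖ < ε
    have htend : Filter.Tendsto (fun n => ‖v n‖) Filter.atTop (nhds 0) :=
      hv.tendsto_atTop_zero
    obtain ⟨N, hN⟩ := Metric.tendsto_atTop.mp htend ε hε
    have hn := hN N le_rfl
    set n := N with hndef
    -- flip at coordinate n
    set b' : ℕ → Bool := Function.update b n (!(b n)) with hb'def
    have hbne : b' ≠ b := by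
      intro hcontra
      have : b' n = b n := by rw [hcontra]
      rw [hb'def, Function.update_self] at this
      exact (Bool.not_ne_self (b n)) this
    have hdiff : Φ b' - Φ b = (if b' n then v n else 0) - (if b n then v n else 0) := by
      rw [hΦdef]
      rw [← Summable.tsum_sub (hvsum b') (hvsum b)]
      refine tsum_eq_single n fun m hm => ?_
      have : b' m = b m := Function.update_of_ne hm _ _
      rw [this, sub_self]
    have hdist : dist (Φ b') (Φ b) < ε := by
      rw [dist_eq_norm, hdiff]
      have hb'n : b' n = !(b n) := Function.update_self _ _ _
      have : ‖(if b' n then v n else 0) - (if b n then v n else 0)‖ = ‖v n‖ := by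
        cases h : b n <;> rw [hb'n, h] <;> simp
      rw [this]
      simpa using hn
    refine ⟨Φ b', ⟨hball ?_, Set.mem_range_self _⟩, fun hc => hbne (hinj hc)⟩
    exact Metric.mem_ball.mpr hdist
  · rw [show achievementSet (fun n => (x n, y n)) = Set.range Φ from hrange]
    exact hemb.isTotallyDisconnected_range.mpr inferInstance
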